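/- Let X, Y be n×m real matrices with r = rank(X), and let Z = Y X† X with singular values σᵢ^Z. The minimal Frobenius-norm error over rank-k matrices M satisfies min_{rank(M)≤k} ‖Y − M X‖_F² = Σ_{i=k+1}^{min(n,m)} (σᵢ^Z)² + ‖Y (I − X† X)‖_F². -/

import Mathlib

open Matrix

noncomputable section

/-- `Xd` is the Moore–Penrose pseudoinverse of `X` (the four Penrose conditions). -/
def IsMoorePenrose {n m : ℕ} (X : Matrix (Fin n) (Fin m) ℝ)
    (Xd : Matrix (Fin m) (Fin n) ℝ) : Prop :=
  X * Xd * X = X ∧ Xd * X * Xd = Xd ∧ (X * Xd)ᵀ = X * Xd ∧ (Xd * X)ᵀ = Xd * X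

/-- Squared Frobenius norm. -/
def frobSq {n m : ℕ} (A : Matrix (Fin n) (Fin m) ℝ) : ℝ := ∑ i, ∑ j, (A i j) ^ 2

/-- Frobenius norm. -/
def frob {n m : ℕ} (A : Matrix (Fin n) (Fin m) ℝ) : ℝ := Real.sqrt (frobSq A)

/-- Rectangular diagonal matrix with entries `σ 0, σ 1, …` on the diagonal. -/
def rdiag (n m : ℕ) (σ : ℕ → ℝ) : Matrix (Fin n) (Fin m) ℝ :=
  Matrix.of fun i j => if (i : ℕ) = (j : ℕ) then σ (i : ℕ) else 0

/-- Rectangular diagonal matrix truncated to its first `k` diagonal entries. -/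
def rdiagTrunc (n m k : ℕ) (σ : ℕ → ℝ) : Matrix (Fin n) (Fin m) ℝ :=
  Matrix.of fun i j => if (i : ℕ) = (j : ℕ) ∧ (i : ℕ) < k then σ (i : ℕ) else 0

/-- Diagonal projector onto the first `k` coordinates. -/
def dproj (n k : ℕ) : Matrix (Fin n) (Fin n) ℝ :=
  Matrix.of fun i j => if i = j ∧ (i : ℕ) < k then (1 : ℝ) else 0

/-- `A = U * rdiag σ * Vᵀ` is a singular value decomposition of `A`:
`U`, `V` are orthogonal and the singular values `σ` are nonnegative and nonincreasing. -/
def IsSVDecomp {n m : ℕ} (A : Matrix (Fin n) (Fin m) ℝ) (U : Matrix (Fin n) (Fin n) ℝ)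
    (V : Matrix (Fin m) (Fin m) ℝ) (σ : ℕ → ℝ) : Prop :=
  U * Uᵀ = 1 ∧ Uᵀ * U = 1 ∧ V * Vᵀ = 1 ∧ Vᵀ * V = 1 ∧
  (∀ i, 0 ≤ σ i) ∧ (∀ i j, i ≤ j → σ j ≤ σ i) ∧ (∀ i, min n m ≤ i → σ i = 0) ∧
  A = U * rdiag n m σ * Vᵀ

/-! ### Auxiliary lemmas on the squared Frobenius norm -/

lemma frobSq_nonneg {n m : ℕ} (A : Matrix (Fin n) (Fin m) ℝ) : 0 ≤ frobSq A :=
  Finset.sum_nonneg fun _ _ => Finset.sum_nonneg fun _ _ => sq_nonneg _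

lemma frobSq_eq_trace {n m : ℕ} (A : Matrix (Fin n) (Fin m) ℝ) :
    frobSq A = (Aᵀ * A).trace := by
  rw [frobSq, Matrix.trace, Finset.sum_comm]
  refine Finset.sum_congr rfl fun j _ => ?_
  simp [Matrix.diag, Matrix.mul_apply, sq]

lemma frobSq_add_of_mul_transpose_eq_zero {n m : ℕ} {A B : Matrix (Fin n) (Fin m) ℝ}
    (h : A * Bᵀ = 0) : frobSq (A + B) = frobSq A + frobSq B := by
  have hcross : ∑ i, ∑ j, A i j * B i j = 0 := by
    have h1 : ∀ i, (A * Bᵀ) i i = ∑ j, A i j * B i j := by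
      intro i; simp [Matrix.mul_apply]
    calc ∑ i, ∑ j, A i j * B i j = ∑ i : Fin n, (A * Bᵀ) i i := by
          refine Finset.sum_congr rfl fun i _ => (h1 i).symm
      _ = 0 := by simp [h]
  have expand : frobSq (A + B) = frobSq A + 2 * (∑ i, ∑ j, A i j * B i j) + frobSq B := by
    simp only [frobSq, Matrix.add_apply, Finset.mul_sum, ← Finset.sum_add_distrib]
    refine Finset.sum_congr rfl fun i _ => Finset.sum_congr rfl fun j _ => by ring
  rw [expand, hcross]; ring

lemma frobSq_orth_left {n m : ℕ} (U : Matrix (Fin n) (Fin n) ℝ) (A : Matrix (Fin n) (Fin m) ℝ)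
    (hU : Uᵀ * U = 1) : frobSq (U * A) = frobSq A := by
  rw [frobSq_eq_trace, frobSq_eq_trace, Matrix.transpose_mul]
  rw [show Aᵀ * Uᵀ * (U * A) = Aᵀ * (Uᵀ * U) * A by simp only [Matrix.mul_assoc], hU,
    Matrix.mul_one]

lemma frobSq_mul_transpose_semiorth {n m d : ℕ} (C : Matrix (Fin n) (Fin d) ℝ)
    (W : Matrix (Fin m) (Fin d) ℝ) (hW : Wᵀ * W = 1) : frobSq (C * Wᵀ) = frobSq C := by
  rw [frobSq_eq_trace, frobSq_eq_trace, Matrix.transpose_mul, Matrix.transpose_transpose]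
  rw [show W * Cᵀ * (C * Wᵀ) = (W * (Cᵀ * C)) * Wᵀ by simp only [Matrix.mul_assoc],
    Matrix.trace_mul_comm,
    show Wᵀ * (W * (Cᵀ * C)) = (Wᵀ * W) * (Cᵀ * C) by simp only [Matrix.mul_assoc], hW,
    Matrix.one_mul]

lemma frobSq_proj_decomp {n m : ℕ} (A : Matrix (Fin n) (Fin m) ℝ)
    (Q : Matrix (Fin m) (Fin m) ℝ) (hQs : Qᵀ = Q) (hQi : Q * Q = Q) :
    frobSq A = frobSq (A * Q) + frobSq (A * (1 - Q)) := by
  have h0 : (A * Q) * (A * (1 - Q))ᵀ = 0 := by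
    rw [Matrix.transpose_mul, Matrix.transpose_sub, Matrix.transpose_one, hQs]
    have hq0 : Q * (1 - Q) = 0 := by rw [Matrix.mul_sub, Matrix.mul_one, hQi, sub_self]
    calc A * Q * ((1 - Q) * Aᵀ) = A * (Q * (1 - Q)) * Aᵀ := by simp only [Matrix.mul_assoc]
      _ = 0 := by rw [hq0, Matrix.mul_zero, Matrix.zero_mul]
  have hsum : A = A * Q + A * (1 - Q) := by rw [← Matrix.mul_add]; simp
  calc frobSq A = frobSq (A * Q + A * (1 - Q)) := by rw [← hsum]
    _ = _ := frobSq_add_of_mul_transpose_eq_zero h0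

lemma frobSq_mul_semiorth_le {n m d : ℕ} (A : Matrix (Fin n) (Fin m) ℝ)
    (W : Matrix (Fin m) (Fin d) ℝ) (hW : Wᵀ * W = 1) : frobSq (A * W) ≤ frobSq A := by
  have hQs : (W * Wᵀ)ᵀ = W * Wᵀ := by simp [Matrix.transpose_mul]
  have hQi : (W * Wᵀ) * (W * Wᵀ) = W * Wᵀ := by
    rw [show W * Wᵀ * (W * Wᵀ) = W * (Wᵀ * W) * Wᵀ by simp only [Matrix.mul_assoc], hW,
      Matrix.mul_one]
  have hdec := frobSq_proj_decomp A (W * Wᵀ) hQs hQi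
  have h2 : frobSq (A * (W * Wᵀ)) = frobSq (A * W) := by
    rw [← Matrix.mul_assoc]; exact frobSq_mul_transpose_semiorth (A * W) W hW
  nlinarith [frobSq_nonneg (A * (1 - W * Wᵀ))]

/-! ### The weighted tail-sum inequality -/

lemma tail_sum_le_weighted {n m k : ℕ} (d : ℕ) (σ : ℕ → ℝ) (hnn : ∀ i, 0 ≤ σ i)
    (hmono : ∀ i j, i ≤ j → σ j ≤ σ i) (hz : ∀ i, min n m ≤ i → σ i = 0)
    (c : ℕ → ℝ) (hc0 : ∀ i, 0 ≤ c i) (hc1 : ∀ i, c i ≤ 1)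
    (hsum : ∑ i ∈ Finset.range m, c i = d) (hd : m ≤ k + d) :
    ∑ i ∈ Finset.Ico k (min n m), σ i ^ 2 ≤ ∑ i ∈ Finset.range (min n m), σ i ^ 2 * c i := by
  set a : ℕ → ℝ := fun i => σ i ^ 2 with ha
  have ha0 : ∀ i, 0 ≤ a i := fun i => sq_nonneg _
  have hamono : ∀ i j, i ≤ j → a j ≤ a i := fun i j hij =>
    pow_le_pow_left₀ (hnn j) (hmono i j hij) 2
  have haz : ∀ i, min n m ≤ i → a i = 0 := fun i hi => by simp [ha, hz i hi]
  by_cases hk : min n m ≤ k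
  · rw [Finset.Ico_eq_empty (by omega)]
    simpa using Finset.sum_nonneg fun i _ => mul_nonneg (ha0 i) (hc0 i)
  push_neg at hk
  have hkm : k < m := lt_of_lt_of_le hk (min_le_right n m)
  have e1 : ∑ i ∈ Finset.range (min n m), a i * c i = ∑ i ∈ Finset.range m, a i * c i := by
    refine Finset.sum_subset (Finset.range_subset_range.2 (min_le_right n m)) fun i _ hi => ?_
    rw [Finset.mem_range, not_lt] at hi
    rw [haz i hi, zero_mul]
  have e2 : ∑ i ∈ Finset.Ico k (min n m), a i = ∑ i ∈ Finset.Ico k m, a i := by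
    refine Finset.sum_subset (Finset.Ico_subset_Ico le_rfl (min_le_right n m)) fun i hi hni => ?_
    rw [Finset.mem_Ico] at hi hni
    exact haz i (by omega)
  have hsplitc : ∑ i ∈ Finset.range k, c i + ∑ i ∈ Finset.Ico k m, c i
      = ∑ i ∈ Finset.range m, c i := by
    rw [Finset.range_eq_Ico, Finset.range_eq_Ico]
    exact Finset.sum_Ico_consecutive _ (Nat.zero_le k) hkm.le
  have hsplita : ∑ i ∈ Finset.range m, a i * c i
      = ∑ i ∈ Finset.range k, a i * c i + ∑ i ∈ Finset.Ico k m, a i * c i := by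
    rw [Finset.range_eq_Ico, Finset.range_eq_Ico]
    exact (Finset.sum_Ico_consecutive _ (Nat.zero_le k) hkm.le).symm
  have h1 : a k * ∑ i ∈ Finset.range k, c i ≤ ∑ i ∈ Finset.range k, a i * c i := by
    rw [Finset.mul_sum]
    refine Finset.sum_le_sum fun i hi => ?_
    exact mul_le_mul_of_nonneg_right (hamono i k (Finset.mem_range.1 hi).le) (hc0 i)
  have h2 : ∑ i ∈ Finset.Ico k m, (a i - a i * c i) ≤ a k * ∑ i ∈ Finset.Ico k m, (1 - c i) := by
    rw [Finset.mul_sum]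
    refine Finset.sum_le_sum fun i hi => ?_
    have hki : k ≤ i := (Finset.mem_Ico.1 hi).1
    have := hamono k i hki
    nlinarith [hc1 i, hc0 i, ha0 i, ha0 k]
  have h3 : ∑ i ∈ Finset.Ico k m, (1 - c i) = (m - k : ℝ) - ∑ i ∈ Finset.Ico k m, c i := by
    rw [Finset.sum_sub_distrib, Finset.sum_const, Nat.card_Ico, nsmul_eq_mul, mul_one]
    have : ((m - k : ℕ) : ℝ) = (m : ℝ) - k := by
      push_cast [Nat.cast_sub hkm.le]; ring
    rw [this]
  have h4 : ∑ i ∈ Finset.Ico k m, (a i - a i * c i)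
      = ∑ i ∈ Finset.Ico k m, a i - ∑ i ∈ Finset.Ico k m, a i * c i :=
    Finset.sum_sub_distrib _ _
  have hT1 : 0 ≤ ∑ i ∈ Finset.range k, c i := Finset.sum_nonneg fun i _ => hc0 i
  have hdm : (m : ℝ) ≤ (k : ℝ) + (d : ℝ) := by exact_mod_cast hd
  rw [e1, e2, hsplita]
  nlinarith [ha0 k]

/-! ### Orthonormal family in the kernel of a low-rank matrix -/

lemma exists_ker_orthonormal {n m : ℕ} (B : Matrix (Fin n) (Fin m) ℝ) :
    ∃ (d : ℕ) (w : Fin d → EuclideanSpace ℝ (Fin m)), Orthonormal ℝ w ∧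
      (∀ j, B.mulVec (w j) = 0) ∧ m = B.rank + d := by
  let L : EuclideanSpace ℝ (Fin m) →ₗ[ℝ] (Fin n → ℝ) :=
    B.mulVecLin ∘ₗ (WithLp.linearEquiv 2 ℝ (Fin m → ℝ)).toLinearMap
  let K := LinearMap.ker L
  let b := stdOrthonormalBasis ℝ K
  refine ⟨Module.finrank ℝ K, fun j => (K.subtypeₗᵢ : K →ₗᵢ[ℝ] _) (b j),
    b.orthonormal.comp_linearIsometry _, ?_, ?_⟩
  · intro j
    have h2 : L ↑(b j) = 0 := (b j).2
    exact h2
  · have h1 := LinearMap.finrank_range_add_finrank_ker L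
    rw [finrank_euclideanSpace_fin] at h1
    have h2 : LinearMap.range L = LinearMap.range B.mulVecLin := by
      rw [LinearMap.range_comp, LinearEquiv.range, Submodule.map_top]
    rw [h2] at h1
    rw [Matrix.rank]
    exact h1.symm

/-! ### A helper for sums over the rectangular diagonal -/

lemma sum_fin_tail {n m k : ℕ} (σ : ℕ → ℝ) (hz : ∀ i, min n m ≤ i → σ i = 0) :
    ∑ i : Fin n, (if (i : ℕ) < m ∧ k ≤ (i : ℕ) then σ (i : ℕ) ^ 2 else 0)
      = ∑ i ∈ Finset.Ico k (min n m), σ i ^ 2 := by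
  rw [Fin.sum_univ_eq_sum_range (fun i => if i < m ∧ k ≤ i then σ i ^ 2 else 0) n]
  rw [show ∑ i ∈ Finset.Ico k (min n m), σ i ^ 2
      = ∑ i ∈ Finset.Ico k (min n m), (if i < m ∧ k ≤ i then σ i ^ 2 else 0) from
    Finset.sum_congr rfl fun i hi => by
      rw [Finset.mem_Ico] at hi
      rw [if_pos ⟨by omega, hi.1⟩]]
  refine (Finset.sum_subset (fun i hi => ?_) fun i hi hni => ?_).symm
  · rw [Finset.mem_Ico] at hi
    rw [Finset.mem_range]
    omega
  · rw [Finset.mem_range] at hi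
    rw [Finset.mem_Ico] at hni
    rw [if_neg (by omega)]

/-! ### Eckart–Young lower bound for a rectangular diagonal matrix -/

lemma EY_diag {n m k : ℕ} (σ : ℕ → ℝ) (hnn : ∀ i, 0 ≤ σ i)
    (hmono : ∀ i j, i ≤ j → σ j ≤ σ i) (hz : ∀ i, min n m ≤ i → σ i = 0)
    (B : Matrix (Fin n) (Fin m) ℝ) (hB : B.rank ≤ k) :
    ∑ i ∈ Finset.Ico k (min n m), σ i ^ 2 ≤ frobSq (rdiag n m σ - B) := by
  obtain ⟨d, w, hw, hker, hrank⟩ := exists_ker_orthonormal B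
  let W : Matrix (Fin m) (Fin d) ℝ := Matrix.of fun i j => w j i
  have hinner : ∀ j j', ∑ i, w j i * w j' i = if j = j' then (1 : ℝ) else 0 := by
    intro j j'
    have h := orthonormal_iff_ite.mp hw j j'
    rw [PiLp.inner_apply] at h
    simpa [mul_comm] using h
  have hWo : Wᵀ * W = 1 := by
    ext j j'
    simp only [Matrix.mul_apply, Matrix.transpose_apply, Matrix.of_apply, W, Matrix.one_apply]
    exact hinner j j'
  set cc : ℕ → ℝ := fun i => if h : i < m then ∑ j, (w j ⟨i, h⟩) ^ 2 else 0 with hcc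
  have hc0 : ∀ i, 0 ≤ cc i := by
    intro i
    simp only [hcc]
    split
    · exact Finset.sum_nonneg fun j _ => sq_nonneg _
    · exact le_rfl
  have hc1 : ∀ i, cc i ≤ 1 := by
    intro i
    simp only [hcc]
    split
    case isTrue h =>
      have hb := hw.sum_inner_products_le (𝕜 := ℝ)
        (EuclideanSpace.single (⟨i, h⟩ : Fin m) (1 : ℝ)) (s := Finset.univ)
      rw [EuclideanSpace.norm_single] at hb
      simp only [norm_one, one_pow] at hb
      refine le_trans (le_of_eq ?_) hb
      refine Finset.sum_congr rfl fun j _ => ?_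
      rw [EuclideanSpace.inner_single_right]
      simp [Real.norm_eq_abs, sq_abs]
    case isFalse => exact zero_le_one
  have hsum : ∑ i ∈ Finset.range m, cc i = d := by
    rw [← Fin.sum_univ_eq_sum_range]
    have : ∀ i : Fin m, cc (i : ℕ) = ∑ j, (w j i) ^ 2 := by
      intro i
      simp only [hcc]
      rw [dif_pos i.isLt]
    rw [Finset.sum_congr rfl fun i _ => this i, Finset.sum_comm]
    have hone : ∀ j : Fin d, ∑ i, (w j i) ^ 2 = 1 := by
      intro j
      have := hinner j j
      rw [if_pos rfl] at this
      rw [← this]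
      exact Finset.sum_congr rfl fun i _ => sq (w j i)
    rw [Finset.sum_congr rfl fun j _ => hone j]
    simp
  have hBW : (rdiag n m σ - B) * W = rdiag n m σ * W := by
    have hzero : B * W = 0 := by
      ext i j
      have := congrFun (hker j) i
      simpa [Matrix.mul_apply, Matrix.mulVec, dotProduct, W] using this
    rw [Matrix.sub_mul, hzero, sub_zero]
  have hentry : ∀ (i : Fin n) (j : Fin d), (rdiag n m σ * W) i j
      = if h : (i : ℕ) < m then σ (i : ℕ) * w j ⟨(i : ℕ), h⟩ else 0 := by
    intro i j
    rw [Matrix.mul_apply]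
    by_cases h : (i : ℕ) < m
    · rw [dif_pos h, Finset.sum_eq_single (⟨(i : ℕ), h⟩ : Fin m)]
      · simp [rdiag, W]
      · intro l _ hl
        have : ¬((i : ℕ) = (l : ℕ)) := fun he => hl (by exact Fin.ext he.symm)
        simp [rdiag, W, this]
      · intro habs; exact absurd (Finset.mem_univ _) habs
    · rw [dif_neg h]
      refine Finset.sum_eq_zero fun l _ => ?_
      have : ¬((i : ℕ) = (l : ℕ)) := by omega
      simp [rdiag, W, this]
  have key2 : frobSq (rdiag n m σ * W) = ∑ i ∈ Finset.range (min n m), σ i ^ 2 * cc i := by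
    rw [frobSq]
    have hrow : ∀ i : Fin n, ∑ j, ((rdiag n m σ * W) i j) ^ 2 = σ (i : ℕ) ^ 2 * cc (i : ℕ) := by
      intro i
      by_cases h : (i : ℕ) < m
      · simp only [hcc]
        rw [dif_pos h, Finset.mul_sum]
        refine Finset.sum_congr rfl fun j _ => ?_
        rw [hentry i j, dif_pos h]
        ring
      · simp only [hcc]
        rw [dif_neg h, mul_zero]
        refine Finset.sum_eq_zero fun j _ => ?_
        rw [hentry i j, dif_neg h]
        simp
    rw [Finset.sum_congr rfl fun i _ => hrow i]
    rw [Fin.sum_univ_eq_sum_range (fun i => σ i ^ 2 * cc i) n]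
    refine (Finset.sum_subset (Finset.range_subset_range.2 (min_le_left n m)) fun i hi hni => ?_).symm
    rw [Finset.mem_range] at hi hni
    by_cases h : i < m
    · rw [hz i (by omega), zero_pow, zero_mul]; omega
    · simp only [hcc]; rw [dif_neg h, mul_zero]
  have key3 := tail_sum_le_weighted (n := n) (m := m) (k := k) d σ hnn hmono hz cc hc0 hc1 hsum (by omega)
  have key1 := frobSq_mul_semiorth_le (rdiag n m σ - B) W hWo
  rw [hBW, key2] at key1
  linarith

/-! ### Frobenius norm of the tail of a rectangular diagonal matrix -/

lemma frobSq_tail_rdiag {n m k : ℕ} (σ : ℕ → ℝ) (hz : ∀ i, min n m ≤ i → σ i = 0) :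
    frobSq (rdiag n m σ - dproj n k * rdiag n m σ) = ∑ i ∈ Finset.Ico k (min n m), σ i ^ 2 := by
  have hEnt : ∀ (i : Fin n) (j : Fin m), (rdiag n m σ - dproj n k * rdiag n m σ) i j
      = if ((i : ℕ) = (j : ℕ) ∧ k ≤ (i : ℕ)) then σ (i : ℕ) else 0 := by
    intro i j
    have hD : (dproj n k * rdiag n m σ) i j
        = if (i : ℕ) < k then rdiag n m σ i j else 0 := by
      rw [Matrix.mul_apply, Finset.sum_eq_single i]
      · by_cases h2 : (i : ℕ) < k
        · simp [dproj, h2]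
        · simp [dproj, h2]
      · intro l _ hl
        have : ¬(i = l ∧ (i : ℕ) < k) := fun hc => hl hc.1.symm
        simp [dproj, this]
      · intro habs; exact absurd (Finset.mem_univ _) habs
    rw [Matrix.sub_apply, hD]
    simp only [rdiag, Matrix.of_apply]
    split_ifs <;> first | (exfalso; omega) | ring
  have hrow : ∀ i : Fin n, ∑ j, ((rdiag n m σ - dproj n k * rdiag n m σ) i j) ^ 2
      = if ((i : ℕ) < m ∧ k ≤ (i : ℕ)) then σ (i : ℕ) ^ 2 else 0 := by
    intro i
    by_cases h : (i : ℕ) < m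
    · rw [Finset.sum_eq_single (⟨(i : ℕ), h⟩ : Fin m)]
      · rw [hEnt]
        by_cases h2 : k ≤ (i : ℕ)
        · rw [if_pos ⟨rfl, h2⟩, if_pos ⟨h, h2⟩]
        · rw [if_neg (by tauto), if_neg (by tauto)]
          exact zero_pow (by omega)
      · intro l _ hl
        rw [hEnt]
        have : ¬((i : ℕ) = (l : ℕ)) := fun he => hl (Fin.ext he.symm)
        rw [if_neg (by tauto)]
        exact zero_pow (by omega)
      · intro habs; exact absurd (Finset.mem_univ _) habs
    · rw [if_neg (by tauto)]
      refine Finset.sum_eq_zero fun l _ => ?_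
      rw [hEnt]
      have : ¬((i : ℕ) = (l : ℕ)) := by omega
      rw [if_neg (by tauto)]
      exact zero_pow (by omega)
  rw [frobSq, Finset.sum_congr rfl fun i _ => hrow i]
  exact sum_fin_tail σ hz

/-! ### The main theorem -/

/-- with `Z = Y X† X`, the minimal squared Frobenius error over
matrices `M` of rank at most `k` equals
`Σ_{i=k+1}^{min(n,m)} (σᵢ^Z)² + ‖Y (I − X† X)‖_F²`. -/
theorem minimal_low_rank_error {n m k : ℕ}
    (X Y : Matrix (Fin n) (Fin m) ℝ) (Xd : Matrix (Fin m) (Fin n) ℝ)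
    (hXd : IsMoorePenrose X Xd)
    (Uz : Matrix (Fin n) (Fin n) ℝ) (Vz : Matrix (Fin m) (Fin m) ℝ) (σ : ℕ → ℝ)
    (hSVD : IsSVDecomp (Y * Xd * X) Uz Vz σ) :
    IsLeast {e : ℝ | ∃ M : Matrix (Fin n) (Fin n) ℝ, M.rank ≤ k ∧
        e = frobSq (Y - M * X)}
      (∑ i ∈ Finset.Ico k (min n m), σ i ^ 2 + frobSq (Y * (1 - Xd * X))) := by
  obtain ⟨hP1, hP2, hP3, hP4⟩ := hXd
  obtain ⟨hU1, hU2, hV1, hV2, hnn, hmono, hz, hZ⟩ := hSVD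
  set P : Matrix (Fin m) (Fin m) ℝ := Xd * X with hP
  set Z : Matrix (Fin n) (Fin m) ℝ := Y * Xd * X with hZdef
  have hPi : P * P = P := by
    rw [hP, show Xd * X * (Xd * X) = (Xd * X * Xd) * X by simp only [Matrix.mul_assoc], hP2]
  have hXP : X * P = X := by
    rw [hP, ← Matrix.mul_assoc, hP1]
  have hZP : Z = Y * P := by rw [hZdef, hP, Matrix.mul_assoc]
  -- decomposition of the error for an arbitrary M
  have hdec : ∀ M : Matrix (Fin n) (Fin n) ℝ,
      frobSq (Y - M * X) = frobSq (Z - M * X) + frobSq (Y * (1 - P)) := by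
    intro M
    have h1 := frobSq_proj_decomp (Y - M * X) P hP4 hPi
    have h2 : (Y - M * X) * P = Z - M * X := by
      rw [Matrix.sub_mul, hZP, Matrix.mul_assoc, hXP]
    have h3 : (Y - M * X) * (1 - P) = Y * (1 - P) := by
      rw [Matrix.sub_mul]
      have : M * X * (1 - P) = 0 := by
        rw [Matrix.mul_sub, Matrix.mul_one, Matrix.mul_assoc, hXP, sub_self]
      rw [this, sub_zero]
    rw [h1, h2, h3]
  -- invariance: frobSq (Z - N) = frobSq (rdiag - Uzᵀ N Vz)
  have hinv : ∀ N : Matrix (Fin n) (Fin m) ℝ,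
      frobSq (Z - N) = frobSq (rdiag n m σ - Uzᵀ * N * Vz) := by
    intro N
    have hZN : Z - N = Uz * ((rdiag n m σ - Uzᵀ * N * Vz) * Vzᵀ) := by
      rw [Matrix.sub_mul, Matrix.mul_sub, hZ]
      congr 1
      · simp only [Matrix.mul_assoc]
      · rw [show Uz * (Uzᵀ * N * Vz * Vzᵀ) = (Uz * Uzᵀ) * (N * (Vz * Vzᵀ)) by
          simp only [Matrix.mul_assoc], hU1, hV1, Matrix.one_mul, Matrix.mul_one]
    rw [hZN, frobSq_orth_left Uz _ hU2, frobSq_mul_transpose_semiorth _ Vz hV2]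
  constructor
  · -- membership: the truncated SVD attains the bound
    set M₀ : Matrix (Fin n) (Fin n) ℝ := Uz * dproj n k * Uzᵀ * Y * Xd with hM0
    refine ⟨M₀, ?_, ?_⟩
    · -- rank bound
      have hsplit : M₀ = (Uz * dproj n k) * (Uzᵀ * Y * Xd) := by
        rw [hM0]; simp only [Matrix.mul_assoc]
      have hDdiag : dproj n k
          = Matrix.diagonal (fun i : Fin n => if (i : ℕ) < k then (1 : ℝ) else 0) := by
        ext i j
        by_cases h1 : i = j
        · subst h1; by_cases h2 : (i : ℕ) < k <;> simp [dproj, Matrix.diagonal, h2]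
        · simp [dproj, Matrix.diagonal, h1, Ne.symm h1]
      have hrankD : (dproj n k).rank ≤ k := by
        rw [hDdiag, Matrix.rank_diagonal]
        have : Fintype.card {i : Fin n // (if (i : ℕ) < k then (1 : ℝ) else 0) ≠ 0} ≤
            Fintype.card (Fin k) := by
          refine Fintype.card_le_of_injective
            (fun x => ⟨(x.1 : ℕ), by by_contra hik; exact x.2 (if_neg (by omega))⟩) ?_
          intro x y hxy
          exact Subtype.ext (Fin.ext (by simpa using congrArg Fin.val hxy))
        simpa using this
      calc M₀.rank ≤ (Uz * dproj n k).rank := by rw [hsplit]; exact Matrix.rank_mul_le_left _ _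
        _ ≤ (dproj n k).rank := Matrix.rank_mul_le_right _ _
        _ ≤ k := hrankD
    · -- value attained
      have hM0X : M₀ * X = Uz * (dproj n k * rdiag n m σ) * Vzᵀ := by
        have h1 : M₀ * X = Uz * dproj n k * Uzᵀ * Z := by
          rw [hM0, hZdef]; simp only [Matrix.mul_assoc]
        rw [h1, hZ, show Uz * dproj n k * Uzᵀ * (Uz * rdiag n m σ * Vzᵀ)
            = Uz * dproj n k * ((Uzᵀ * Uz) * rdiag n m σ) * Vzᵀ by simp only [Matrix.mul_assoc],
          hU2, Matrix.one_mul]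
        simp only [Matrix.mul_assoc]
      have hZM : Z - M₀ * X = Uz * ((rdiag n m σ - dproj n k * rdiag n m σ) * Vzᵀ) := by
        rw [hM0X, hZ, Matrix.sub_mul, Matrix.mul_sub]
        simp only [Matrix.mul_assoc]
      rw [hdec M₀, hZM, frobSq_orth_left Uz _ hU2, frobSq_mul_transpose_semiorth _ Vz hV2,
        frobSq_tail_rdiag σ hz]
  · -- lower bound
    rintro e ⟨M, hMrank, rfl⟩
    rw [hdec M, hinv (M * X)]
    have hrankB : (Uzᵀ * (M * X) * Vz).rank ≤ k := by
      refine le_trans (Matrix.rank_mul_le_left _ _) ?_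
      refine le_trans (Matrix.rank_mul_le_right _ _) ?_
      exact le_trans (Matrix.rank_mul_le_left _ _) hMrank
    have := EY_diag σ hnn hmono hz (Uzᵀ * (M * X) * Vz) hrankB
    have h2 := frobSq_nonneg (Y * (1 - P))
    linarith
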